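/- arXiv:1111.4635 — 5 statements merged into one kernel-verified Lean document; each statement's English description precedes it below -/
import Mathlib

section
/- Let f : ℤ₂ → ℤ₂ be a 1-Lipschitz transitive map. Then for every x ∈ ℤ₂ and every n ∈ ℕ one has f^[2^n](x) ≡ x + 2^n (mod 2^(n+1)), i.e. ‖f^[2^n](x) − x − 2^n‖ ≤ 2^(−(n+1)). -/
open Function Finset

/-- `a ≡ b (mod 2^s)` in the 2-adic integers. -/
def CongMod (s : ℕ) (a b : ℤ_[2]) : Prop := ‖a - b‖ ≤ ((2 : ℝ) ^ s)⁻¹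

/-- `f` is 1-Lipschitz for the 2-adic norm (a T-function). -/
def OneLip (f : ℤ_[2] → ℤ_[2]) : Prop := ∀ a b : ℤ_[2], ‖f a - f b‖ ≤ ‖a - b‖

/-- `f` is transitive modulo `2^n`. -/
def TransMod (f : ℤ_[2] → ℤ_[2]) (n : ℕ) : Prop :=
  ∀ x y : ℤ_[2], ∃ i < 2 ^ n, CongMod n (f^[i] x) y

/-- `f` is transitive (single cycle modulo every power of 2). -/
def TransitiveT (f : ℤ_[2] → ℤ_[2]) : Prop := ∀ n : ℕ, 1 ≤ n → TransMod f n

/-- `f` is bijective modulo `2^n`. -/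
def BijMod (f : ℤ_[2] → ℤ_[2]) (n : ℕ) : Prop :=
  (∀ a b : ℤ_[2], CongMod n (f a) (f b) → CongMod n a b) ∧
  (∀ y : ℤ_[2], ∃ x : ℤ_[2], CongMod n (f x) y)

/-- `f` is bijective (measure-preserving T-function). -/
def BijectiveT (f : ℤ_[2] → ℤ_[2]) : Prop := ∀ n : ℕ, 1 ≤ n → BijMod f n

/-- `g` is a derivative of `f` modulo `2^M` with parameter `K`. -/
def IsDerivMod (f g : ℤ_[2] → ℤ_[2]) (M K : ℕ) : Prop :=
  ∀ x h : ℤ_[2], ‖h‖ ≤ ((2 : ℝ) ^ K)⁻¹ →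
    ‖f (x + h) - f x - g x * h‖ ≤ ((2 : ℝ) ^ M)⁻¹ * ‖h‖

/-- The `n`-th binary digit of a 2-adic integer, as an element of `ZMod 2`.
`PadicInt.appr x n` is the unique integer in `{0, …, 2^n - 1}` congruent to `x` mod `2^n`. -/
noncomputable def delta (n : ℕ) (x : ℤ_[2]) : ZMod 2 :=
  (((x.appr (n + 1) - x.appr n) / 2 ^ n : ℕ) : ZMod 2)

open PadicInt

lemma congMod_iff_toZModPow (s : ℕ) (a b : ℤ_[2]) :
    CongMod s a b ↔ toZModPow s a = toZModPow s b := by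
  have h2 : ((2:ℝ)^s)⁻¹ = ((2:ℕ):ℝ)^(-(s:ℤ)) := by
    rw [zpow_neg, zpow_natCast]; norm_num
  rw [CongMod, h2, PadicInt.norm_le_pow_iff_mem_span_pow, ← PadicInt.ker_toZModPow,
      RingHom.mem_ker, map_sub, sub_eq_zero]

lemma iter_inj {f : ℤ_[2] → ℤ_[2]} {m : ℕ} (ht : TransMod f m) (x : ℤ_[2])
    {i j : ℕ} (hi : i < 2^m) (hj : j < 2^m)
    (h : toZModPow m (f^[i] x) = toZModPow m (f^[j] x)) : i = j := by
  set g : Fin (2^m) → ZMod (2^m) := fun k => toZModPow m (f^[(k:ℕ)] x) with hg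
  have hsurj : Function.Surjective g := by
    intro y
    obtain ⟨z, hz⟩ := ZMod.ringHom_surjective (toZModPow (p := 2) m) y
    obtain ⟨k, hk, hck⟩ := ht x z
    exact ⟨⟨k, hk⟩, by
      show toZModPow m (f^[k] x) = y
      rw [(congMod_iff_toZModPow m _ _).mp hck, hz]⟩
  have hbij : Function.Bijective g :=
    (Fintype.bijective_iff_surjective_and_card g).mpr ⟨hsurj, by simp⟩
  have h2 : (⟨i, hi⟩ : Fin (2^m)) = ⟨j, hj⟩ := hbij.injective h
  simpa using congrArg Fin.val h2

/-- For a transitive T-function, `f^[2^n](x) ≡ x + 2^n (mod 2^(n+1))`. -/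
theorem iterate_pow_two_congr (f : ℤ_[2] → ℤ_[2])
    (hf : OneLip f) (hft : TransitiveT f) (x : ℤ_[2]) (n : ℕ) :
    ‖f^[2 ^ n] x - x - 2 ^ n‖ ≤ ((2 : ℝ) ^ (n + 1))⁻¹ := by
  have hpos : (0:ℕ) < 2^n := Nat.pow_pos (by norm_num)
  have hpos1 : (0:ℕ) < 2^(n+1) := Nat.pow_pos (by norm_num)
  have hA : CongMod n (f^[2^n] x) x := by
    rcases Nat.eq_zero_or_pos n with hn | hn
    · subst hn
      simpa [CongMod] using PadicInt.norm_le_one _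
    · obtain ⟨i, hi, hci⟩ := hft n hn (f x) x
      have h1 : f^[i] (f x) = f^[i+1] x := (Function.iterate_succ_apply f i x).symm
      rw [h1] at hci
      rcases lt_or_eq_of_le (Nat.succ_le_of_lt hi) with h | h
      · exfalso
        have h0 : toZModPow n (f^[i+1] x) = toZModPow n (f^[0] x) := by
          simpa using (congMod_iff_toZModPow n _ _).mp hci
        exact absurd (iter_inj (hft n hn) x h hpos h0) (Nat.succ_ne_zero i)
      · exact h ▸ hci
  have ht1 := hft (n+1) (Nat.le_add_left 1 n)
  have hB : ¬ CongMod (n+1) (f^[2^n] x) x := by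
    intro h
    have h0 : toZModPow (n+1) (f^[2^n] x) = toZModPow (n+1) (f^[0] x) := by
      simpa using (congMod_iff_toZModPow (n+1) _ _).mp h
    have h2n : (2:ℕ)^n < 2^(n+1) :=
      Nat.pow_lt_pow_right (by norm_num) (Nat.lt_succ_self n)
    exact absurd (iter_inj ht1 x h2n hpos1 h0) hpos.ne'
  have hd : (2:ℤ_[2])^n ∣ (f^[2^n] x - x) := by
    have hmem : f^[2^n] x - x ∈ (Ideal.span {((2:ℕ):ℤ_[2])^n} : Ideal ℤ_[2]) := by
      rw [← PadicInt.norm_le_pow_iff_mem_span_pow]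
      have h := hA
      rw [CongMod] at h
      convert h using 2
      rw [zpow_neg, zpow_natCast]; norm_num
    have hcast : ((2:ℕ):ℤ_[2]) = (2:ℤ_[2]) := by norm_num
    rw [hcast] at hmem
    exact Ideal.mem_span_singleton.mp hmem
  obtain ⟨c, hc⟩ := hd
  have hnorm2 : ‖(2:ℤ_[2])‖ = 2⁻¹ := by simpa using PadicInt.norm_p (p := 2)
  have hnorm2n : ‖(2:ℤ_[2])^n‖ = (2:ℝ)⁻¹^n := by rw [norm_pow, hnorm2]
  have key : ∀ a : ℤ_[2], toZModPow 1 a = 0 → ‖a‖ ≤ 2⁻¹ := by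
    intro a ha
    have h := (congMod_iff_toZModPow 1 a 0).mpr (by simpa using ha)
    rw [CongMod, sub_zero] at h
    simpa using h
  rcases (show ∀ a : ZMod 2, a = 0 ∨ a = 1 by decide) (toZModPow 1 c) with h0 | h1
  · exfalso
    apply hB
    rw [CongMod, hc]
    calc ‖(2:ℤ_[2])^n * c‖ = ‖(2:ℤ_[2])^n‖ * ‖c‖ := norm_mul _ _
      _ ≤ (2:ℝ)⁻¹^n * 2⁻¹ := by
          rw [hnorm2n]
          exact mul_le_mul_of_nonneg_left (key c h0) (by positivity)
      _ = ((2:ℝ)^(n+1))⁻¹ := by rw [pow_succ, _root_.mul_inv, inv_pow]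
  · have hc1 : ‖c - 1‖ ≤ 2⁻¹ := key _ (by rw [map_sub, h1, map_one, sub_self])
    have heq : f^[2^n] x - x - 2^n = (2:ℤ_[2])^n * (c - 1) := by rw [hc]; ring
    rw [heq]
    calc ‖(2:ℤ_[2])^n * (c-1)‖ = ‖(2:ℤ_[2])^n‖ * ‖c-1‖ := norm_mul _ _
      _ ≤ (2:ℝ)⁻¹^n * 2⁻¹ := by
          rw [hnorm2n]
          exact mul_le_mul_of_nonneg_left hc1 (by positivity)
      _ = ((2:ℝ)^(n+1))⁻¹ := by rw [pow_succ, _root_.mul_inv, inv_pow]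
end

section
/- (Chain rule for iterates.) Let f : ℤ₂ → ℤ₂ be a 1-Lipschitz map and let g : ℤ₂ → ℤ₂ be a derivative of f modulo 2^M with parameter K. Then for every i ≥ 1 the function x ↦ ∏_{j=0}^{i−1} g(f^[j](x)) is a derivative of the i-th iterate f^[i] modulo 2^M with parameter K; that is, for all x, h ∈ ℤ₂ with ‖h‖ ≤ 2^(−K) one has ‖f^[i](x+h) − f^[i](x) − (∏_{j=0}^{i−1} g(f^[j](x)))·h‖ ≤ 2^(−M)·‖h‖. -/
open Function Finset

/-- Chain rule for iterates: the product of derivatives along the orbit is a derivative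
modulo `2^M` of the iterate. -/
theorem chain_rule_iterates (f g : ℤ_[2] → ℤ_[2]) (M K : ℕ)
    (hf : OneLip f) (hg : IsDerivMod f g M K) :
    ∀ i : ℕ, 1 ≤ i →
      IsDerivMod (f^[i]) (fun x => ∏ j ∈ Finset.range i, g (f^[j] x)) M K := by
  have hfit : ∀ i : ℕ, ∀ a b : ℤ_[2], ‖f^[i] a - f^[i] b‖ ≤ ‖a - b‖ := by
    intro i
    induction i with
    | zero => intro a b; simp
    | succ n ih =>
      intro a b
      rw [Function.iterate_succ_apply', Function.iterate_succ_apply']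
      exact (hf _ _).trans (ih a b)
  intro i hi
  induction i with
  | zero => omega
  | succ n ih =>
    intro x h hh
    rcases Nat.eq_zero_or_pos n with rfl | hn
    · simpa using hg x h hh
    · have IH := ih hn x h hh
      simp only at IH
      set y := f^[n] x with hy
      set h' := f^[n] (x + h) - f^[n] x with hh'
      have hstep : ‖h'‖ ≤ ‖h‖ := by
        rw [hh']; simpa using hfit n (x+h) x
      have hh'norm : ‖h'‖ ≤ ((2:ℝ)^K)⁻¹ := le_trans hstep hh
      have A := hg y h' hh'norm
      have hMnn : (0:ℝ) ≤ ((2:ℝ)^M)⁻¹ := by positivity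
      have A' : ‖f (y + h') - f y - g y * h'‖ ≤ ((2:ℝ)^M)⁻¹ * ‖h‖ :=
        A.trans (mul_le_mul_of_nonneg_left hstep hMnn)
      set P := ∏ j ∈ Finset.range n, g (f^[j] x) with hP
      have B : ‖g y * (h' - P * h)‖ ≤ ((2:ℝ)^M)⁻¹ * ‖h‖ := by
        rw [norm_mul]
        calc ‖g y‖ * ‖h' - P * h‖ ≤ 1 * (((2:ℝ)^M)⁻¹ * ‖h‖) :=
              mul_le_mul (PadicInt.norm_le_one _) IH (norm_nonneg _)
                zero_le_one
          _ = ((2:ℝ)^M)⁻¹ * ‖h‖ := one_mul _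
      have key : f^[n+1] (x + h) = f (y + h') := by
        rw [Function.iterate_succ_apply']
        congr 1
        rw [hh']
        ring
      have key2 : f^[n+1] x = f y := by rw [Function.iterate_succ_apply']
      have prodkey : (∏ j ∈ Finset.range (n+1), g (f^[j] x)) = P * g y := by
        rw [Finset.prod_range_succ]
      simp only [key, key2, prodkey]
      have E : f (y + h') - f y - P * g y * h =
          (f (y + h') - f y - g y * h') + g y * (h' - P * h) := by ring
      rw [E]
      exact (PadicInt.nonarchimedean _ _).trans (max_le A' B)
end

section
/- Let f : ℤ₂ → ℤ₂ be a 1-Lipschitz transitive map and let g : ℤ₂ → ℤ₂ be a derivative of f modulo 4 with parameter K. Then for every x ∈ ℤ₂ and every i ≥ 0 one has ∏_{j=0}^{i+2^K−1} g(f^[j](x)) ≡ ∏_{j=0}^{i−1} g(f^[j](x)) (mod 4), i.e. ‖∏_{j=0}^{i+2^K−1} g(f^[j](x)) − ∏_{j=0}^{i−1} g(f^[j](x))‖ ≤ 2^(−2). (In particular the derivative of the i-th iterate of f at x is, modulo 4, a periodic function of i with period 2^K.) -/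
open Function Finset

lemma tp (n : ℕ) : ((2:ℝ)^n)⁻¹ = ((2:ℕ):ℝ)^(-(n:ℤ)) := by
  push_cast; rw [zpow_neg, zpow_natCast]

lemma norm_le_iff_zmod (n : ℕ) (x : ℤ_[2]) :
    ‖x‖ ≤ ((2:ℝ)^n)⁻¹ ↔ PadicInt.toZModPow n x = 0 := by
  rw [tp, PadicInt.norm_le_pow_iff_mem_span_pow, ← PadicInt.ker_toZModPow, RingHom.mem_ker]

lemma norm_sub_max (a b : ℤ_[2]) : ‖a - b‖ ≤ max ‖a‖ ‖b‖ := by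
  simpa [sub_eq_add_neg] using PadicInt.nonarchimedean a (-b)

lemma norm_sub_eq (a b : ℤ_[2]) (h : ‖b‖ < ‖a‖) : ‖a - b‖ = ‖a‖ := by
  refine le_antisymm ((norm_sub_max a b).trans (by simp [h.le])) ?_
  have h2 : ‖a‖ ≤ max ‖a - b‖ ‖b‖ := by
    simpa using PadicInt.nonarchimedean (a - b) b
  rcases le_max_iff.1 h2 with h3 | h3
  · exact h3
  · exact absurd h3 (not_le.2 h)

lemma norm_exact (n : ℕ) (x : ℤ_[2]) (h1 : ‖x‖ ≤ ((2:ℝ)^n)⁻¹)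
    (h2 : ¬ ‖x‖ ≤ ((2:ℝ)^(n+1))⁻¹) : ‖x‖ = ((2:ℝ)^n)⁻¹ := by
  refine le_antisymm h1 (not_lt.1 fun hlt => h2 ?_)
  rw [tp] at hlt ⊢
  rw [PadicInt.norm_le_pow_iff_norm_lt_pow_add_one]
  have : (-((n:ℤ)+1) + 1 : ℤ) = -(n:ℤ) := by ring
  rw [show (-(((n:ℕ)+1:ℕ)):ℤ) + 1 = -(n:ℤ) by push_cast; ring]
  exact hlt

lemma lip_iter {f : ℤ_[2] → ℤ_[2]} (hf : OneLip f) (n : ℕ) (a b : ℤ_[2]) :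
    ‖f^[n] a - f^[n] b‖ ≤ ‖a - b‖ := by
  induction n with
  | zero => simp
  | succ n ih =>
    rw [iterate_succ_apply', iterate_succ_apply']
    exact (hf _ _).trans ih

lemma norm_two_pow (K : ℕ) : ‖((2:ℕ):ℤ_[2])^K‖ = ((2:ℝ)^K)⁻¹ := by
  rw [PadicInt.norm_p_pow, tp]

lemma norm_g_le_one {f g : ℤ_[2] → ℤ_[2]} {K : ℕ} (hf : OneLip f)
    (hg : IsDerivMod f g 2 K) (x : ℤ_[2]) : ‖g x‖ ≤ 1 := by
  set h : ℤ_[2] := ((2:ℕ):ℤ_[2])^K with hh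
  have hn : ‖h‖ = ((2:ℝ)^K)⁻¹ := norm_two_pow K
  have hpos : (0:ℝ) < ‖h‖ := by rw [hn]; positivity
  have h1 : ‖f (x + h) - f x‖ ≤ ‖h‖ := by
    simpa using hf (x + h) x
  have h2 : ‖f (x + h) - f x - g x * h‖ ≤ ‖h‖ := by
    refine (hg x h hn.le).trans ?_
    nth_rewrite 2 [← one_mul ‖h‖]
    gcongr
    norm_num
  have h3 : ‖g x * h‖ ≤ ‖h‖ := by
    have : g x * h = (f (x + h) - f x) - (f (x + h) - f x - g x * h) := by ring
    rw [this]
    exact (norm_sub_max _ _).trans (max_le h1 h2)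
  rw [norm_mul] at h3
  calc ‖g x‖ = ‖g x‖ * ‖h‖ / ‖h‖ := by field_simp
  _ ≤ ‖h‖ / ‖h‖ := by gcongr
  _ = 1 := by field_simp

lemma chain {f g : ℤ_[2] → ℤ_[2]} {K : ℕ} (hf : OneLip f)
    (hg : IsDerivMod f g 2 K) (x δ : ℤ_[2]) (hδ : ‖δ‖ ≤ ((2:ℝ)^K)⁻¹) (n : ℕ) :
    ‖f^[n] (x + δ) - f^[n] x - (∏ j ∈ Finset.range n, g (f^[j] x)) * δ‖
      ≤ ((2:ℝ)^(2:ℕ))⁻¹ * ‖δ‖ := by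
  induction n with
  | zero => simp
  | succ n ih =>
    set y := f^[n] x with hy
    set δ' := f^[n] (x + δ) - y with hδ'def
    have hyd : y + δ' = f^[n] (x + δ) := by rw [hδ'def]; ring
    have hδ'le : ‖δ'‖ ≤ ‖δ‖ := by
      simpa using lip_iter hf n (x + δ) x
    have h1 : ‖f (y + δ') - f y - g y * δ'‖ ≤ ((2:ℝ)^(2:ℕ))⁻¹ * ‖δ'‖ :=
      hg y δ' (hδ'le.trans hδ)
    have key : f^[n+1] (x + δ) - f^[n+1] x - (∏ j ∈ Finset.range (n+1), g (f^[j] x)) * δ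
        = (f (y + δ') - f y - g y * δ')
          + g y * (f^[n] (x + δ) - f^[n] x - (∏ j ∈ Finset.range n, g (f^[j] x)) * δ) := by
      rw [prod_range_succ, iterate_succ_apply', iterate_succ_apply', hyd, ← hy, hδ'def]
      ring
    rw [key]
    refine (PadicInt.nonarchimedean _ _).trans (max_le ?_ ?_)
    · exact h1.trans (by gcongr)
    · rw [norm_mul]
      calc ‖g y‖ * ‖f^[n] (x + δ) - f^[n] x - (∏ j ∈ Finset.range n, g (f^[j] x)) * δ‖
          ≤ 1 * (((2:ℝ)^(2:ℕ))⁻¹ * ‖δ‖) := by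
            exact mul_le_mul (norm_g_le_one hf hg y) ih (norm_nonneg _) zero_le_one
      _ = ((2:ℝ)^(2:ℕ))⁻¹ * ‖δ‖ := one_mul _

lemma cong_iff_zmod (n : ℕ) (a b : ℤ_[2]) :
    CongMod n a b ↔ PadicInt.toZModPow n a = PadicInt.toZModPow n b := by
  rw [CongMod, norm_le_iff_zmod, map_sub, sub_eq_zero]

lemma orbit_inj {f : ℤ_[2] → ℤ_[2]} {n : ℕ} (ht : TransMod f n) (x : ℤ_[2])
    {i j : ℕ} (hi : i < 2^n) (hj : j < 2^n)
    (h : PadicInt.toZModPow n (f^[i] x) = PadicInt.toZModPow n (f^[j] x)) : i = j := by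
  haveI : NeZero (2^n) := ⟨pow_ne_zero n two_ne_zero⟩
  set e : Fin (2^n) → ZMod (2^n) := fun k => PadicInt.toZModPow n (f^[k.val] x) with he
  have hsurj : Function.Surjective e := by
    intro y
    obtain ⟨k, hk, hck⟩ := ht x ((y.val : ℕ) : ℤ_[2])
    refine ⟨⟨k, hk⟩, ?_⟩
    rw [he]
    have := (cong_iff_zmod n _ _).1 hck
    simpa [ZMod.natCast_zmod_val] using this
  have hbij : Function.Bijective e := by
    rw [Fintype.bijective_iff_surjective_and_card]
    exact ⟨hsurj, by simp⟩
  have := hbij.injective (a₁ := ⟨i, hi⟩) (a₂ := ⟨j, hj⟩) (by simpa [he] using h)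
  simpa using congrArg Fin.val this

lemma cyc {f : ℤ_[2] → ℤ_[2]} {n : ℕ} (ht : TransMod f n) (x : ℤ_[2]) :
    ‖f^[2^n] x - x‖ ≤ ((2:ℝ)^n)⁻¹ := by
  obtain ⟨i, hi, hc⟩ := ht (f x) x
  have hc' : ‖f^[i+1] x - x‖ ≤ ((2:ℝ)^n)⁻¹ := by
    rw [iterate_succ_apply]; exact hc
  rcases Nat.lt_or_ge (i+1) (2^n) with h | h
  · exfalso
    have h0 : (0:ℕ) < 2^n := Nat.pow_pos (n := n) (by norm_num)
    have : i + 1 = 0 := by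
      refine orbit_inj ht x h h0 ?_
      have := (norm_le_iff_zmod n _).1 hc'
      rw [map_sub, sub_eq_zero] at this
      simpa using this
    omega
  · have : i + 1 = 2^n := le_antisymm hi h
    rwa [this] at hc'

lemma notcyc {f : ℤ_[2] → ℤ_[2]} {n : ℕ} (ht : TransMod f n) (x : ℤ_[2])
    {m : ℕ} (h0 : 0 < m) (hm : m < 2^n) : ¬ ‖f^[m] x - x‖ ≤ ((2:ℝ)^n)⁻¹ := by
  intro h
  have h0' : (0:ℕ) < 2^n := Nat.pow_pos (n := n) (by norm_num)
  have : m = 0 := by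
    refine orbit_inj ht x hm h0' ?_
    have := (norm_le_iff_zmod n _).1 h
    rw [map_sub, sub_eq_zero] at this
    simpa using this
  omega

lemma prod_cong_one {f g : ℤ_[2] → ℤ_[2]} {K : ℕ} (hf : OneLip f)
    (hft : TransitiveT f) (hg : IsDerivMod f g 2 K) (x : ℤ_[2]) :
    ‖(∏ j ∈ Finset.range (2^K), g (f^[j] x)) - 1‖ ≤ ((2:ℝ)^(2:ℕ))⁻¹ := by
  set G : ℤ_[2] := ∏ j ∈ Finset.range (2^K), g (f^[j] x) with hG
  set h : ℤ_[2] := f^[2^K] x - x with hhdef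
  -- ‖h‖ = 2^{-K}
  have hh_le : ‖h‖ ≤ ((2:ℝ)^K)⁻¹ := by
    rcases Nat.eq_zero_or_pos K with rfl | hK
    · simpa using PadicInt.norm_le_one h
    · exact cyc (hft K hK) x
  have hh_ne : ¬ ‖h‖ ≤ ((2:ℝ)^(K+1))⁻¹ :=
    notcyc (hft (K+1) (by omega)) x (Nat.pow_pos (n := K) two_pos)
      (Nat.pow_lt_pow_right one_lt_two (Nat.lt_succ_self K))
  have hh : ‖h‖ = ((2:ℝ)^K)⁻¹ := norm_exact K h hh_le hh_ne
  -- D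
  set D : ℤ_[2] := f^[2^(K+1)] x - x with hDdef
  have hD_le : ‖D‖ ≤ ((2:ℝ)^(K+1))⁻¹ := cyc (hft (K+1) (by omega)) x
  have hD_ne : ¬ ‖D‖ ≤ ((2:ℝ)^(K+2))⁻¹ :=
    notcyc (hft (K+2) (by omega)) x (Nat.pow_pos (n := K+1) two_pos)
      (Nat.pow_lt_pow_right one_lt_two (Nat.lt_succ_self (K+1)))
  have hD : ‖D‖ = ((2:ℝ)^(K+1))⁻¹ := norm_exact (K+1) D hD_le hD_ne
  -- chain rule
  have hch := chain hf hg x h hh_le (2^K)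
  have hxh : x + h = f^[2^K] x := by rw [hhdef]; ring
  have hiter : f^[2^K] (x + h) = f^[2^(K+1)] x := by
    rw [hxh, ← Function.iterate_add_apply]
    congr 1
    rw [pow_succ]; ring
  have hE : ‖D - (1 + G) * h‖ ≤ ((2:ℝ)^(K+2))⁻¹ := by
    have e1 : D - (1 + G) * h = f^[2^K] (x + h) - f^[2^K] x - G * h := by
      rw [hiter, hDdef, hhdef]; ring
    rw [e1]
    refine hch.trans ?_
    rw [hh]
    rw [show ((2:ℝ)^(K+2))⁻¹ = ((2:ℝ)^(2:ℕ))⁻¹ * ((2:ℝ)^K)⁻¹ by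
      rw [← mul_inv, ← pow_add]; ring_nf]
  have hElt : ‖D - (1 + G) * h‖ < ‖D‖ := by
    refine hE.trans_lt ?_
    rw [hD]
    gcongr
    · norm_num
    · omega
  -- ‖(1+G) h‖ = ‖D‖
  have hGh : ‖(1 + G) * h‖ = ((2:ℝ)^(K+1))⁻¹ := by
    have : (1 + G) * h = D - (D - (1 + G) * h) := by ring
    rw [this, norm_sub_eq D _ hElt, hD]
  have hG1 : ‖1 + G‖ = (2:ℝ)⁻¹ := by
    rw [norm_mul, hh] at hGh
    have h2K : ((2:ℝ)^K) ≠ 0 := by positivity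
    have hstep : ‖1 + G‖ * 2 * ((2:ℝ)^K) = 1 * ((2:ℝ)^K) := by
      field_simp at hGh
      linear_combination hGh
    have hfin := mul_right_cancel₀ h2K hstep
    linarith
  -- endgame mod 4
  have hdvd : ((2:ℕ):ℤ_[2])^1 ∣ (1 + G) := by
    rw [← Ideal.mem_span_singleton, ← PadicInt.norm_le_pow_iff_mem_span_pow, ← tp 1]
    rw [hG1]; norm_num
  obtain ⟨c, hc⟩ := hdvd
  have hne0 : PadicInt.toZModPow (p := 2) 2 (1 + G) ≠ 0 := by
    intro hz
    have := (norm_le_iff_zmod 2 (1 + G)).2 hz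
    rw [hG1] at this
    norm_num at this
  have hval : PadicInt.toZModPow (p := 2) 2 (1 + G)
      = ((2:ℕ) : ZMod (2^2)) * PadicInt.toZModPow (p := 2) 2 c := by
    rw [hc, map_mul, map_pow, map_natCast, pow_one]
  have hcases : ∀ d : ZMod (2^2), ((2:ℕ) : ZMod (2^2)) * d = 0 ∨
      ((2:ℕ) : ZMod (2^2)) * d = ((2:ℕ) : ZMod (2^2)) := by decide
  have h2 : PadicInt.toZModPow (p := 2) 2 (1 + G) = ((2:ℕ) : ZMod (2^2)) := by
    rcases hcases (PadicInt.toZModPow (p := 2) 2 c) with hd | hd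
    · exact absurd (hval.trans hd) hne0
    · exact hval.trans hd
  have hz : PadicInt.toZModPow (p := 2) 2 (G - 1) = 0 := by
    have e : G - 1 = (1 + G) - ((2:ℕ):ℤ_[2]) := by push_cast; ring
    rw [e, map_sub, h2, map_natCast, sub_self]
  exact (norm_le_iff_zmod 2 _).2 hz

/-- Modulo 4, the derivative of the `i`-th iterate of a transitive T-function is a
periodic function of `i` with period `2^K`. -/
theorem iterate_deriv_periodic (f g : ℤ_[2] → ℤ_[2]) (K : ℕ)
    (hf : OneLip f) (hft : TransitiveT f) (hg : IsDerivMod f g 2 K) :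
    ∀ x : ℤ_[2], ∀ i : ℕ,
      ‖(∏ j ∈ Finset.range (i + 2 ^ K), g (f^[j] x)) -
        ∏ j ∈ Finset.range i, g (f^[j] x)‖ ≤ ((2 : ℝ) ^ (2 : ℕ))⁻¹ := by
  intro x i
  have hsplit : (∏ j ∈ Finset.range (i + 2 ^ K), g (f^[j] x))
      = (∏ j ∈ Finset.range i, g (f^[j] x)) *
        ∏ j ∈ Finset.range (2 ^ K), g (f^[j] (f^[i] x)) := by
    rw [Finset.prod_range_add]
    congr 1
    refine Finset.prod_congr rfl fun j _ => ?_
    rw [add_comm i j, Function.iterate_add_apply]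
  have hPle : ∀ m : ℕ, ‖∏ j ∈ Finset.range m, g (f^[j] x)‖ ≤ 1 := by
    intro m
    induction m with
    | zero => simp
    | succ n ih =>
      rw [Finset.prod_range_succ, norm_mul]
      exact mul_le_one₀ ih (norm_nonneg _) (norm_g_le_one hf hg _)
  have key : (∏ j ∈ Finset.range (i + 2 ^ K), g (f^[j] x)) -
      (∏ j ∈ Finset.range i, g (f^[j] x))
      = (∏ j ∈ Finset.range i, g (f^[j] x)) *
        ((∏ j ∈ Finset.range (2 ^ K), g (f^[j] (f^[i] x))) - 1) := by
    rw [hsplit]; ring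
  rw [key, norm_mul]
  calc ‖∏ j ∈ Finset.range i, g (f^[j] x)‖ *
      ‖(∏ j ∈ Finset.range (2 ^ K), g (f^[j] (f^[i] x))) - 1‖
      ≤ 1 * ((2:ℝ)^(2:ℕ))⁻¹ :=
        mul_le_mul (hPle i) (prod_cong_one hf hft hg (f^[i] x)) (norm_nonneg _) zero_le_one
  _ = ((2:ℝ)^(2:ℕ))⁻¹ := one_mul _
end

section
/- Let f : ℤ₂ → ℤ₂ be a 1-Lipschitz transitive map, x ∈ ℤ₂ and n ≥ 1. Then there exists φ ∈ ℤ₂ with f^[2^(n−1)](x) = x + 2^(n−1)·φ, and for any such φ the following identity holds in ℤ/2ℤ: δ₁(φ) = δ_{n−1}(x) + δ_n(x) + δ_n(f^[2^(n−1)](x)). -/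
open Function Finset

lemma dvd_iff_norm (k : ℕ) (w : ℤ_[2]) : (2:ℤ_[2])^k ∣ w ↔ ‖w‖ ≤ ((2:ℝ)^k)⁻¹ := by
  have h1 : ((2:ℝ)^k)⁻¹ = ((2:ℕ):ℝ)^(-(k:ℤ)) := by
    push_cast; rw [zpow_neg, zpow_natCast]
  rw [h1, PadicInt.norm_le_pow_iff_mem_span_pow, Ideal.mem_span_singleton]
  norm_num

lemma congmod_iff_dvd (s : ℕ) (a b : ℤ_[2]) : CongMod s a b ↔ (2:ℤ_[2])^s ∣ (a - b) :=
  (dvd_iff_norm s (a-b)).symm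

lemma intCast_dvd (k : ℕ) (z : ℤ) : (2:ℤ_[2])^k ∣ (z:ℤ_[2]) ↔ (2:ℤ)^k ∣ z := by
  rw [dvd_iff_norm]
  have h1 : ((2:ℝ)^k)⁻¹ = ((2:ℕ):ℝ)^(-(k:ℤ)) := by
    push_cast; rw [zpow_neg, zpow_natCast]
  rw [h1]
  have := @PadicInt.norm_int_le_pow_iff_dvd 2 _ z k
  norm_num at this ⊢
  exact this

lemma congmod_iff_toZMod (s : ℕ) (a b : ℤ_[2]) :
    CongMod s a b ↔ PadicInt.toZModPow s a = PadicInt.toZModPow s b := by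
  rw [congmod_iff_dvd, ← Ideal.mem_span_singleton, ← sub_eq_zero, ← map_sub,
    ← RingHom.mem_ker, PadicInt.ker_toZModPow]
  norm_num

lemma iterate_cong (f : ℤ_[2] → ℤ_[2]) (hf : OneLip f) (s i : ℕ) (a b : ℤ_[2])
    (h : CongMod s a b) : CongMod s (f^[i] a) (f^[i] b) := by
  induction i with
  | zero => simpa using h
  | succ i ih =>
    rw [Function.iterate_succ_apply', Function.iterate_succ_apply']
    exact le_trans (hf _ _) ih

lemma surj_orbit (f : ℤ_[2] → ℤ_[2]) (m : ℕ) (hm : 1 ≤ m) (ht : TransMod f m) (x : ℤ_[2])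
    (y : ZMod (2^m)) : ∃ i ∈ Finset.range (2^m), PadicInt.toZModPow m (f^[i] x) = y := by
  haveI : NeZero (2^m) := ⟨pow_ne_zero _ two_ne_zero⟩
  obtain ⟨i, hi, hc⟩ := ht x ((y.val : ℕ) : ℤ_[2])
  refine ⟨i, Finset.mem_range.mpr hi, ?_⟩
  rw [congmod_iff_toZMod] at hc
  rw [hc, map_natCast, ZMod.natCast_zmod_val]

lemma inj_orbit (f : ℤ_[2] → ℤ_[2]) (m : ℕ) (hm : 1 ≤ m) (ht : TransMod f m) (x : ℤ_[2]) :
    Set.InjOn (fun i => PadicInt.toZModPow m (f^[i] x)) (Finset.range (2^m)) := by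
  haveI : NeZero (2^m) := ⟨pow_ne_zero _ two_ne_zero⟩
  apply Finset.injOn_of_card_image_eq
  have himg : (Finset.range (2^m)).image (fun i => PadicInt.toZModPow m (f^[i] x)) = Finset.univ := by
    apply Finset.eq_univ_iff_forall.mpr
    intro y
    obtain ⟨i, hi, he⟩ := surj_orbit f m hm ht x y
    exact Finset.mem_image.mpr ⟨i, hi, he⟩
  rw [himg, Finset.card_univ, ZMod.card, Finset.card_range]

/-- `f^[2^m] x ≡ x (mod 2^m)`. -/
lemma periodic_mod (f : ℤ_[2] → ℤ_[2]) (hf : OneLip f) (hft : TransitiveT f) (m : ℕ)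
    (x : ℤ_[2]) : CongMod m (f^[2^m] x) x := by
  rcases Nat.eq_zero_or_pos m with rfl | hm
  · rw [congmod_iff_dvd]; simp
  obtain ⟨i, hi, hc⟩ := hft m hm (f x) x
  rw [← Function.iterate_succ_apply] at hc
  rcases Nat.lt_or_ge (i+1) (2^m) with h | h
  · exfalso
    rw [congmod_iff_toZMod] at hc
    have h0 : (0:ℕ) ∈ (Finset.range (2^m) : Set ℕ) := by
      simp [pow_pos]
    have : i + 1 = 0 := inj_orbit f m hm (hft m hm) x (by simpa using h) h0 (by simpa using hc)
    omega
  · have heq : i.succ = 2^m := by omega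
    rw [heq] at hc; exact hc

/-- `f^[2^m] x ≢ x (mod 2^(m+1))`. -/
lemma not_cong (f : ℤ_[2] → ℤ_[2]) (hf : OneLip f) (hft : TransitiveT f) (m : ℕ)
    (x : ℤ_[2]) : ¬ CongMod (m+1) (f^[2^m] x) x := by
  intro h
  set g : ℕ → ZMod (2^(m+1)) := fun i => PadicInt.toZModPow (m+1) (f^[i] x) with hg
  haveI : NeZero (2^(m+1)) := ⟨pow_ne_zero _ two_ne_zero⟩
  have hper : ∀ j, g (j + 2^m) = g j := by
    intro j
    have := iterate_cong f hf (m+1) j _ _ h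
    rw [congmod_iff_toZMod] at this
    simpa [hg, ← Function.iterate_add_apply] using this
  have hsub : (Finset.univ : Finset (ZMod (2^(m+1)))) ⊆
      (Finset.range (2^m)).image g := by
    intro y _
    obtain ⟨i, hi, he⟩ := surj_orbit f (m+1) (by omega) (hft (m+1) (by omega)) x y
    rw [Finset.mem_range] at hi
    rcases Nat.lt_or_ge i (2^m) with h' | h'
    · exact Finset.mem_image.mpr ⟨i, Finset.mem_range.mpr h', he⟩
    · refine Finset.mem_image.mpr ⟨i - 2^m, Finset.mem_range.mpr ?_, ?_⟩
      · have : 2^(m+1) = 2^m + 2^m := by rw [pow_succ]; omega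
        omega
      · rw [← hper (i - 2^m), Nat.sub_add_cancel h']
        exact he
  have hcard := Finset.card_le_card hsub
  rw [Finset.card_univ, ZMod.card] at hcard
  have := (Finset.card_image_le (s := Finset.range (2^m)) (f := g))
  rw [Finset.card_range] at this
  have h2 : (2:ℕ)^(m+1) = 2^m * 2 := pow_succ 2 m
  have hpos : 0 < 2^m := pow_pos (by norm_num : (0:ℕ) < 2) m
  omega

lemma appr_dvd (z : ℤ_[2]) (k : ℕ) : (2:ℤ_[2])^k ∣ (z - z.appr k) := by
  have := z.appr_spec k
  rw [Ideal.mem_span_singleton] at this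
  exact_mod_cast this

lemma natCast_cong (s : ℕ) (a b : ℕ) (h : CongMod s (a:ℤ_[2]) (b:ℤ_[2])) :
    a ≡ b [MOD 2^s] := by
  rw [congmod_iff_dvd] at h
  have : ((a:ℤ_[2]) - b) = (((a:ℤ) - (b:ℤ) : ℤ) : ℤ_[2]) := by push_cast; ring
  rw [this, intCast_dvd] at h
  rw [Nat.modEq_iff_dvd]
  push_cast
  exact dvd_sub_comm.mp h

lemma appr_unique (z : ℤ_[2]) (k : ℕ) (r : ℕ) (hr : r < 2^k)
    (h : (2:ℤ_[2])^k ∣ (z - r)) : z.appr k = r := by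
  have h2 : (2:ℤ_[2])^k ∣ ((z.appr k : ℤ_[2]) - r) := by
    have := appr_dvd z k
    have h3 : ((z.appr k : ℤ_[2]) - r) = (z - r) - (z - z.appr k) := by ring
    rw [h3]; exact dvd_sub h this
  have := natCast_cong k (z.appr k) r (by rw [congmod_iff_dvd]; exact h2)
  have hlt := z.appr_lt k
  exact this.eq_of_lt_of_lt (by exact_mod_cast hlt) hr

lemma appr_succ_mod (z : ℤ_[2]) (k : ℕ) : z.appr k = z.appr (k+1) % 2^k := by
  apply appr_unique
  · exact Nat.mod_lt _ (pow_pos (by norm_num : (0:ℕ) < 2) k)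
  · set A := z.appr (k+1)
    have h1 : (2:ℤ_[2])^(k+1) ∣ (z - A) := appr_dvd z (k+1)
    have h2 : (2:ℤ_[2])^k ∣ ((A:ℤ_[2]) - (A % 2^k : ℕ)) := by
      have hd := Nat.div_add_mod A (2^k)
      have hA : (A:ℤ_[2]) - (A % 2^k : ℕ) = (2:ℤ_[2])^k * (A / 2^k : ℕ) := by
        have : A = 2^k * (A/2^k) + A % 2^k := hd.symm
        nth_rewrite 1 [this]
        push_cast; ring
      rw [hA]; exact Dvd.intro _ rfl
    have h3 : z - (A % 2^k : ℕ) = (z - A) + ((A:ℤ_[2]) - (A % 2^k : ℕ)) := by ring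
    rw [h3]
    exact dvd_add (dvd_trans (pow_dvd_pow 2 (by omega)) h1) h2

lemma delta_eq (k : ℕ) (z : ℤ_[2]) : delta k z = ((z.appr (k+1) / 2^k : ℕ) : ZMod 2) := by
  rw [delta, appr_succ_mod z k]
  congr 1
  have hd := Nat.div_add_mod (z.appr (k+1)) (2^k)
  have : z.appr (k+1) - z.appr (k+1) % 2^k = 2^k * (z.appr (k+1) / 2^k) := by omega
  rw [this, Nat.mul_div_cancel_left _ (pow_pos (by norm_num : (0:ℕ) < 2) k)]

/-- The key combinatorial identity on natural numbers. -/
lemma key_nat (P a b c : ℕ) (hP : 0 < P) (ha : a < P*4) (hb : b < P*4) (hc4 : c < 4)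
    (hc : c % 2 = 1) (hmod : (a + P * c) % (P*4) = b % (P*4)) :
    c/2 ≡ (a % (P*2))/P + a/(P*2) + b/(P*2) [MOD 2] := by
  have hA : a = a % P + P * (a/P) := (Nat.mod_add_div a P).symm
  set A := a / P with hAdef
  set a0 := a % P with ha0def
  have ha0 : a0 < P := Nat.mod_lt _ hP
  have hAlt : A < 4 := Nat.div_lt_of_lt_mul (by omega)
  have e1 : a % (P*2) / P = A % 2 := by
    have hsplit : A = A % 2 + 2*(A/2) := by omega
    have h4 : a = (a0 + P * (A % 2)) + (P*2) * (A/2) := by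
      calc a = a0 + P * A := by omega
        _ = a0 + P * (A % 2 + 2*(A/2)) := by rw [← hsplit]
        _ = (a0 + P * (A % 2)) + (P*2) * (A/2) := by ring
    have h5 : P * (A % 2) ≤ P := by
      have : A % 2 ≤ 1 := by omega
      calc P * (A % 2) ≤ P * 1 := Nat.mul_le_mul_left P this
        _ = P := by ring
    rw [h4, Nat.add_mul_mod_self_left, Nat.mod_eq_of_lt (by omega),
      Nat.add_mul_div_left _ _ hP, Nat.div_eq_of_lt ha0]
    omega
  have e2 : a / (P*2) = A / 2 := by
    rw [← Nat.div_div_eq_div_mul]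
  have e3 : b = a0 + P * ((A + c) % 4) := by
    have hsplit : A + c = (A+c) % 4 + 4*((A+c)/4) := by omega
    have h1 : a + P * c = (a0 + P * ((A + c) % 4)) + (P*4) * ((A+c)/4) := by
      calc a + P * c = a0 + P * (A + c) := by
            rw [hA]; ring
        _ = a0 + P * ((A+c) % 4 + 4*((A+c)/4)) := by rw [← hsplit]
        _ = _ := by ring
    have h5 : P * ((A+c) % 4) ≤ P * 3 := Nat.mul_le_mul_left P (by omega)
    have h2 : a0 + P * ((A + c) % 4) < P*4 := by omega
    rw [h1, Nat.add_mul_mod_self_left, Nat.mod_eq_of_lt h2] at hmod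
    rw [hmod, Nat.mod_eq_of_lt hb]
  have e4 : b / (P*2) = ((A + c) % 4) / 2 := by
    rw [← Nat.div_div_eq_div_mul, e3, Nat.add_mul_div_left _ _ hP, Nat.div_eq_of_lt ha0]
    omega
  rw [e1, e2, e4]
  have hcc : c = 1 ∨ c = 3 := by omega
  rcases hcc with rfl | rfl <;> interval_cases A <;> decide

/-- For a transitive T-function, `f^[2^(n-1)](x) = x + 2^(n-1) φ` for some `φ`, and the
second binary digit of `φ` is expressed through digits of `x` and `f^[2^(n-1)](x)`. -/
theorem phi_digit_identity (f : ℤ_[2] → ℤ_[2])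
    (hf : OneLip f) (hft : TransitiveT f) (x : ℤ_[2]) (n : ℕ) (hn : 1 ≤ n) :
    (∃ φ : ℤ_[2], f^[2 ^ (n - 1)] x = x + 2 ^ (n - 1) * φ) ∧
    ∀ φ : ℤ_[2], f^[2 ^ (n - 1)] x = x + 2 ^ (n - 1) * φ →
      delta 1 φ = delta (n - 1) x + delta n x + delta n (f^[2 ^ (n - 1)] x) := by
  obtain ⟨m, rfl⟩ : ∃ m, n = m + 1 := ⟨n - 1, by omega⟩
  simp only [Nat.add_sub_cancel]
  set y := f^[2^m] x with hy
  have hper : CongMod m y x := periodic_mod f hf hft m x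
  have hnot : ¬ CongMod (m+1) y x := not_cong f hf hft m x
  obtain ⟨φ0, hφ0⟩ := (congmod_iff_dvd m y x).mp hper
  constructor
  · exact ⟨φ0, by linear_combination hφ0⟩
  intro φ hφ
  have hodd : ¬ (2:ℤ_[2]) ∣ φ := by
    rintro ⟨ψ, hψ⟩
    apply hnot
    rw [congmod_iff_dvd]
    exact ⟨ψ, by rw [hφ, hψ]; ring⟩
  set a := x.appr (m+2) with hadef
  set b := y.appr (m+2) with hbdef
  set c := φ.appr 2 with hcdef
  have hφc : (2:ℤ_[2])^2 ∣ (φ - c) := appr_dvd φ 2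
  have hcodd : c % 2 = 1 := by
    rcases Nat.even_or_odd c with he | ho
    · exfalso
      obtain ⟨t, ht⟩ := he
      apply hodd
      have h1 : (2:ℤ_[2]) ∣ (c:ℤ_[2]) := ⟨(t:ℤ_[2]), by rw [ht]; push_cast; ring⟩
      have h2 : (2:ℤ_[2]) ∣ (φ - c) := dvd_trans (dvd_pow_self 2 two_ne_zero) hφc
      have : φ = (φ - c) + c := by ring
      rw [this]
      exact dvd_add h2 h1
    · exact Nat.odd_iff.mp ho
  -- the congruence between a + 2^m c and b modulo 2^(m+2)
  have hcong : (a + 2^m * c) ≡ b [MOD 2^(m+2)] := by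
    apply natCast_cong
    rw [congmod_iff_dvd]
    have hx : (2:ℤ_[2])^(m+2) ∣ (x - a) := appr_dvd x (m+2)
    have hyb : (2:ℤ_[2])^(m+2) ∣ (y - b) := appr_dvd y (m+2)
    have heq : (((a + 2^m * c : ℕ) : ℤ_[2])) - (b:ℤ_[2]) =
        (-(x - (a:ℤ_[2])) + (y - b)) - 2^m * (φ - c) := by
      rw [hφ]; push_cast; ring
    rw [heq]
    refine dvd_sub (dvd_add (dvd_neg.mpr hx) hyb) ?_
    obtain ⟨k, hk⟩ := hφc
    exact ⟨k, by rw [hk]; ring⟩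
  -- bounds
  have hpos : 0 < (2:ℕ)^m := pow_pos (by norm_num : (0:ℕ) < 2) m
  have p2 : (2:ℕ)^(m+2) = 2^m * 4 := by rw [pow_succ, pow_succ]; ring
  have p1 : (2:ℕ)^(m+1) = 2^m * 2 := pow_succ 2 m
  have ha4 : a < 2^m * 4 := by rw [← p2]; exact x.appr_lt (m+2)
  have hb4 : b < 2^m * 4 := by rw [← p2]; exact y.appr_lt (m+2)
  have hc4 : c < 4 := by have := φ.appr_lt 2; norm_num at this; exact this
  have hkey := key_nat (2^m) a b c hpos ha4 hb4 hc4 hcodd (by rw [← p2]; exact hcong)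
  -- rewrite the deltas
  rw [delta_eq 1 φ, delta_eq m x, delta_eq (m+1) x, delta_eq (m+1) y]
  have hxm : x.appr (m+1) = a % 2^(m+1) := appr_succ_mod x (m+1)
  rw [hxm, p1]
  have := (ZMod.natCast_eq_natCast_iff _ _ 2).mpr hkey
  push_cast at this ⊢
  rw [show x.appr (m+1+1) = a from rfl, show y.appr (m+1+1) = b from rfl,
    show φ.appr 2 = c from rfl]
  exact this
end

section
/- Let k ≥ 1, let u : ℤ₂ → ℤ₂ be a 1-Lipschitz map, let v : ℤ → ℤ be any function, and let σ, ε ∈ ℤ. Define f : ℤ₂ → ℤ₂ by f(x) = u(r_k(x)) + (x − r_k(x)) + 2^k·((σ − ε)·v(r_k(x)) + ε), where r_k(x) ∈ {0,…,2^k−1} is the residue of x modulo 2^k (viewed in ℤ₂). Then f is 1-Lipschitz, and for every M ∈ ℕ the constant function 1 is a derivative of f modulo 2^M with parameter k; indeed f(x + 2^k·r) = f(x) + 2^k·r for all x, r ∈ ℤ₂. -/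
open Function Finset

lemma pow_inv_eq (k : ℕ) : ((2:ℝ)^k)⁻¹ = (2:ℝ)^(-(k:ℤ)) := by
  rw [zpow_neg, zpow_natCast]

lemma appr_norm (x : ℤ_[2]) (k : ℕ) : ‖x - (x.appr k : ℤ_[2])‖ ≤ ((2:ℝ)^k)⁻¹ := by
  rw [pow_inv_eq]
  exact_mod_cast (PadicInt.norm_le_pow_iff_mem_span_pow _ k).mpr (x.appr_spec k)

lemma appr_congr {k : ℕ} {a b : ℤ_[2]} (h : ‖a - b‖ ≤ ((2:ℝ)^k)⁻¹) :
    a.appr k = b.appr k := by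
  have hA := appr_norm a k
  have hB := appr_norm b k
  have hd : ‖(((a.appr k : ℤ) - (b.appr k : ℤ) : ℤ) : ℤ_[2])‖ ≤ ((2:ℝ)^k)⁻¹ := by
    have : (((a.appr k : ℤ) - (b.appr k : ℤ) : ℤ) : ℤ_[2])
        = ((a.appr k : ℤ_[2]) - a) + (a - b) + (b - (b.appr k : ℤ_[2])) := by
      push_cast; ring
    rw [this]
    refine le_trans (PadicInt.nonarchimedean _ _) (max_le (le_trans (PadicInt.nonarchimedean _ _) (max_le ?_ h)) hB)
    rwa [norm_sub_rev] at hA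
  rw [pow_inv_eq] at hd
  have hdvd : ((2:ℤ)^k) ∣ ((a.appr k : ℤ) - (b.appr k : ℤ)) := by
    exact_mod_cast PadicInt.norm_int_le_pow_iff_dvd.mp (by exact_mod_cast hd)
  have h1 := a.appr_lt k
  have h2 := b.appr_lt k
  have := Int.eq_zero_of_abs_lt_dvd hdvd (by
    rw [abs_lt]
    constructor <;> [nlinarith [Int.ofNat_lt.mpr h2]; nlinarith [Int.ofNat_lt.mpr h1]])
  omega

/-- The TSC-style T-function is 1-Lipschitz and uniformly differentiable with
derivative identically 1 (indeed `f(x + 2^k r) = f(x) + 2^k r`). -/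
theorem tsc_function_unif_diff (k : ℕ) (hk : 1 ≤ k) (u : ℤ_[2] → ℤ_[2]) (hu : OneLip u)
    (v : ℤ → ℤ) (σ ε : ℤ) (f : ℤ_[2] → ℤ_[2])
    (hfdef : ∀ x : ℤ_[2],
      f x = u ((x.appr k : ℤ_[2])) + (x - (x.appr k : ℤ_[2])) +
        2 ^ k * (((σ - ε) * v (x.appr k) + ε : ℤ) : ℤ_[2])) :
    OneLip f ∧ (∀ M : ℕ, IsDerivMod f (fun _ => 1) M k) ∧
      ∀ x r : ℤ_[2], f (x + 2 ^ k * r) = f x + 2 ^ k * r := by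
  have hu' : ∀ a b : ℤ_[2], ‖u a - u b‖ ≤ ‖a - b‖ := hu
  have hpk : ‖((2:ℤ_[2])^k)‖ = ((2:ℝ)^k)⁻¹ := by
    rw [pow_inv_eq]
    simpa using PadicInt.norm_p_pow (p := 2) k
  have key : ∀ x h : ℤ_[2], ‖h‖ ≤ ((2:ℝ)^k)⁻¹ → f (x + h) = f x + h := by
    intro x h hh
    have happr : (x + h).appr k = x.appr k := by
      apply appr_congr; simpa using hh
    rw [hfdef, hfdef, happr]; ring
  refine ⟨?_, fun M => ?_, ?_⟩
  · intro a b
    by_cases hab : ‖a - b‖ ≤ ((2:ℝ)^k)⁻¹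
    · have := key b (a - b) hab
      rw [add_sub_cancel] at this
      rw [this]
      simp
    · push_neg at hab
      have hab' := hab.le
      have h1 : ‖u ((a.appr k : ℤ_[2])) - u ((b.appr k : ℤ_[2]))‖ ≤ ‖a - b‖ := by
        refine le_trans (hu' _ _) ?_
        have : ((a.appr k : ℤ_[2])) - ((b.appr k : ℤ_[2]))
            = ((a.appr k : ℤ_[2]) - a) + (a - b) + (b - (b.appr k : ℤ_[2])) := by ring
        rw [this]
        refine le_trans (PadicInt.nonarchimedean _ _) (max_le (le_trans (PadicInt.nonarchimedean _ _) (max_le ?_ le_rfl)) (le_trans (appr_norm b k) hab'))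
        rw [norm_sub_rev]
        exact le_trans (appr_norm a k) hab'
      have h2 : ‖(a - (a.appr k : ℤ_[2])) - (b - (b.appr k : ℤ_[2]))‖ ≤ ‖a - b‖ := by
        have hn := PadicInt.nonarchimedean (a - (a.appr k : ℤ_[2])) (-(b - (b.appr k : ℤ_[2])))
        rw [norm_neg] at hn
        rw [sub_eq_add_neg]
        exact le_trans hn (max_le (le_trans (appr_norm a k) hab') (le_trans (appr_norm b k) hab'))
      have h3 : ‖(2:ℤ_[2]) ^ k * ((((σ - ε) * v (a.appr k) + ε : ℤ) : ℤ_[2]) - (((σ - ε) * v (b.appr k) + ε : ℤ) : ℤ_[2]))‖ ≤ ‖a - b‖ := by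
        rw [norm_mul, hpk]
        refine le_trans ?_ hab'
        calc ((2:ℝ)^k)⁻¹ * ‖_‖ ≤ ((2:ℝ)^k)⁻¹ * 1 :=
              mul_le_mul_of_nonneg_left (PadicInt.norm_le_one _) (by positivity)
          _ = ((2:ℝ)^k)⁻¹ := mul_one _
      have hsplit : f a - f b
          = (u ((a.appr k : ℤ_[2])) - u ((b.appr k : ℤ_[2])))
            + (((a - (a.appr k : ℤ_[2])) - (b - (b.appr k : ℤ_[2])))
            + (2:ℤ_[2]) ^ k * ((((σ - ε) * v (a.appr k) + ε : ℤ) : ℤ_[2]) - (((σ - ε) * v (b.appr k) + ε : ℤ) : ℤ_[2]))) := by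
        rw [hfdef a, hfdef b]; ring
      rw [hsplit]
      exact le_trans (PadicInt.nonarchimedean _ _)
        (max_le h1 (le_trans (PadicInt.nonarchimedean _ _) (max_le h2 h3)))
  · intro x h hh
    have := key x h hh
    rw [this]
    simp only [one_mul, add_sub_cancel_left, sub_self, norm_zero]
    positivity
  · intro x r
    apply key
    rw [norm_mul, hpk]
    calc ((2:ℝ)^k)⁻¹ * ‖r‖ ≤ ((2:ℝ)^k)⁻¹ * 1 := by
          exact mul_le_mul_of_nonneg_left (PadicInt.norm_le_one r) (by positivity)
      _ = ((2:ℝ)^k)⁻¹ := mul_one _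
end
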